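/- Let S be a collection of layer products such that every layer product (u',v') whose minimum value is at most a threshold τ is included in S, where τ is the k-th smallest value of X+Y and S contains at least k elements total. Then S contains the k smallest values of X+Y (counted with multiplicity). -/

import Mathlib

/-- Let the multiset X+Y be partitioned into layer products
`part i`, i ∈ P.  Let τ be the k-th smallest value of X+Y.  If T ⊆ P contains
every layer product whose minimum value is ≤ τ, and the union S of the layer
products in T has at least k elements, then S contains the k smallest values of
X+Y (with multiplicity). -/
theorem selected_layer_products_contain_k_smallest
    {ι : Type*} [DecidableEq ι] (P : Finset ι) (part : ι → Multiset ℝ)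
    (M : Multiset ℝ) (hM : M = ∑ i ∈ P, part i)
    (k : ℕ) (hk : 1 ≤ k) (hkM : k ≤ Multiset.card M)
    (τ : ℝ) (hτ : τ = (Multiset.sort M (· ≤ ·)).getD (k - 1) 0)
    (T : Finset ι) (hTP : T ⊆ P)
    (hcover : ∀ i ∈ P, (∃ x ∈ part i, x ≤ τ) → i ∈ T)
    (S : Multiset ℝ) (hS : S = ∑ i ∈ T, part i)
    (hcard : k ≤ Multiset.card S) :
    (↑((Multiset.sort M (· ≤ ·)).take k) : Multiset ℝ) ≤ S := by
  set L := Multiset.sort M (· ≤ ·) with hL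
  have hsorted : L.Pairwise (· ≤ ·) := Multiset.pairwise_sort ..
  have hlen : L.length = Multiset.card M := Multiset.length_sort ..
  have hk1 : k - 1 < L.length := by omega
  have hτ' : τ = L[k-1] := by
    rw [hτ, List.getD_eq_getElem _ _ hk1]
  -- every element of `L.take k` is ≤ τ
  have htake_le : ∀ x ∈ L.take k, x ≤ τ := by
    intro x hx
    rw [List.mem_iff_getElem] at hx
    obtain ⟨i, hi, rfl⟩ := hx
    have hik : i < k := lt_of_lt_of_le hi (by simp [List.length_take])
    rw [List.getElem_take, hτ']
    exact hsorted.rel_get_of_le (by simpa using Nat.le_sub_one_of_lt hik)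
  have hMS : M = S + ∑ i ∈ P \ T, part i := by
    rw [hM, hS, ← Finset.sum_sdiff hTP, add_comm]
  refine Multiset.le_iff_count.mpr fun x => ?_
  by_cases hx : x ∈ L.take k
  · have hxτ : x ≤ τ := htake_le x hx
    have h1 : Multiset.count x (↑(L.take k) : Multiset ℝ) ≤ Multiset.count x M := by
      have : (↑(L.take k) : Multiset ℝ) ≤ ↑L := (List.take_sublist k L).subperm
      have hLM : (↑L : Multiset ℝ) = M := Multiset.sort_eq ..
      rw [← hLM]
      exact Multiset.le_iff_count.mp this x
    have h0 : Multiset.count x (∑ i ∈ P \ T, part i) = 0 := by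
      rw [Multiset.count_eq_zero]
      intro hmem
      rw [Multiset.mem_sum] at hmem
      obtain ⟨i, hiPT, hxi⟩ := hmem
      rw [Finset.mem_sdiff] at hiPT
      exact hiPT.2 (hcover i hiPT.1 ⟨x, hxi, hxτ⟩)
    have : Multiset.count x M = Multiset.count x S := by
      rw [hMS, Multiset.count_add, h0, add_zero]
    omega
  · simp [Multiset.count_eq_zero_of_notMem, hx]
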